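/- The homogeneous ideal (x0^2, x0·x1, x0·f, g) in k[x0,x1,x2,x3], where f = f(x2,x3) is a nonzero quadric and g is a nonzero quartic in the ideal (x1^2, x1·f, f^2) not divisible by x0, contains exactly 19 linearly independent quartic forms. -/

import Mathlib

open MvPolynomial Finsupp

noncomputable section AuxStmt15

/-- The exponent vectors of the 16 monomials of degree 4 divisible by `x0^2` or `x0*x1`. -/
def exv15 : Fin 16 → Fin 4 → ℕ :=
  ![![4,0,0,0],![3,1,0,0],![3,0,1,0],![3,0,0,1],![2,2,0,0],![2,1,1,0],![2,1,0,1],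
    ![2,0,2,0],![2,0,1,1],![2,0,0,2],![1,3,0,0],![1,2,1,0],![1,2,0,1],![1,1,2,0],
    ![1,1,1,1],![1,1,0,2]]

def exd15 (i : Fin 16) : Fin 4 →₀ ℕ := Finsupp.equivFunOnFinite.symm (exv15 i)

lemma exd15_apply (i : Fin 16) (j : Fin 4) : exd15 i j = exv15 i j := rfl

lemma deg4_15 (d : Fin 4 →₀ ℕ) : d.degree = d 0 + d 1 + d 2 + d 3 := by
  rw [Finsupp.degree_apply, Finset.sum_subset (Finset.subset_univ _)
    (fun i _ h => Finsupp.notMem_support_iff.mp h), Fin.sum_univ_four]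

lemma degree_add_15 {σ : Type*} (x y : σ →₀ ℕ) : (x + y).degree = x.degree + y.degree := by
  simp [Finsupp.degree_eq_weight_one, map_add]

lemma eq_exd15 (i : Fin 16) {d : Fin 4 →₀ ℕ} (h0 : d 0 = exv15 i 0) (h1 : d 1 = exv15 i 1)
    (h2 : d 2 = exv15 i 2) (h3 : d 3 = exv15 i 3) : d = exd15 i := by
  rw [exd15, Equiv.eq_symm_apply]
  have : ⇑d = exv15 i := by funext j; fin_cases j <;> assumption
  exact this ▸ rfl

set_option maxHeartbeats 1000000 in
lemma enum16_15 (a b c e : ℕ) (hdeg : a + b + c + e = 4) (h : 2 ≤ a ∨ (1 ≤ a ∧ 1 ≤ b)) :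
    (a = 4 ∧ b = 0 ∧ c = 0 ∧ e = 0) ∨ (a = 3 ∧ b = 1 ∧ c = 0 ∧ e = 0) ∨ (a = 3 ∧ b = 0 ∧ c = 1 ∧ e = 0) ∨ (a = 3 ∧ b = 0 ∧ c = 0 ∧ e = 1) ∨ (a = 2 ∧ b = 2 ∧ c = 0 ∧ e = 0) ∨ (a = 2 ∧ b = 1 ∧ c = 1 ∧ e = 0) ∨ (a = 2 ∧ b = 1 ∧ c = 0 ∧ e = 1) ∨ (a = 2 ∧ b = 0 ∧ c = 2 ∧ e = 0) ∨ (a = 2 ∧ b = 0 ∧ c = 1 ∧ e = 1) ∨ (a = 2 ∧ b = 0 ∧ c = 0 ∧ e = 2) ∨ (a = 1 ∧ b = 3 ∧ c = 0 ∧ e = 0) ∨ (a = 1 ∧ b = 2 ∧ c = 1 ∧ e = 0) ∨ (a = 1 ∧ b = 2 ∧ c = 0 ∧ e = 1) ∨ (a = 1 ∧ b = 1 ∧ c = 2 ∧ e = 0) ∨ (a = 1 ∧ b = 1 ∧ c = 1 ∧ e = 1) ∨ (a = 1 ∧ b = 1 ∧ c = 0 ∧ e = 2) := by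
  have ha : a ≤ 4 := by omega
  have hb : b ≤ 4 := by omega
  have hc : c ≤ 4 := by omega
  have he : e ≤ 4 := by omega
  interval_cases a <;> interval_cases b <;> interval_cases c <;> interval_cases e <;> simp_all

set_option maxHeartbeats 1000000 in
lemma class16_15 {d : Fin 4 →₀ ℕ} (hdeg : d.degree = 4)
    (h : 2 ≤ d 0 ∨ (1 ≤ d 0 ∧ 1 ≤ d 1)) : ∃ i : Fin 16, d = exd15 i := by
  rw [deg4_15] at hdeg
  rcases enum16_15 _ _ _ _ hdeg h with ⟨h0,h1,h2,h3⟩|⟨h0,h1,h2,h3⟩|⟨h0,h1,h2,h3⟩|⟨h0,h1,h2,h3⟩|⟨h0,h1,h2,h3⟩|⟨h0,h1,h2,h3⟩|⟨h0,h1,h2,h3⟩|⟨h0,h1,h2,h3⟩|⟨h0,h1,h2,h3⟩|⟨h0,h1,h2,h3⟩|⟨h0,h1,h2,h3⟩|⟨h0,h1,h2,h3⟩|⟨h0,h1,h2,h3⟩|⟨h0,h1,h2,h3⟩|⟨h0,h1,h2,h3⟩|⟨h0,h1,h2,h3⟩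
  · exact ⟨0, eq_exd15 0 h0 h1 h2 h3⟩
  · exact ⟨1, eq_exd15 1 h0 h1 h2 h3⟩
  · exact ⟨2, eq_exd15 2 h0 h1 h2 h3⟩
  · exact ⟨3, eq_exd15 3 h0 h1 h2 h3⟩
  · exact ⟨4, eq_exd15 4 h0 h1 h2 h3⟩
  · exact ⟨5, eq_exd15 5 h0 h1 h2 h3⟩
  · exact ⟨6, eq_exd15 6 h0 h1 h2 h3⟩
  · exact ⟨7, eq_exd15 7 h0 h1 h2 h3⟩
  · exact ⟨8, eq_exd15 8 h0 h1 h2 h3⟩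
  · exact ⟨9, eq_exd15 9 h0 h1 h2 h3⟩
  · exact ⟨10, eq_exd15 10 h0 h1 h2 h3⟩
  · exact ⟨11, eq_exd15 11 h0 h1 h2 h3⟩
  · exact ⟨12, eq_exd15 12 h0 h1 h2 h3⟩
  · exact ⟨13, eq_exd15 13 h0 h1 h2 h3⟩
  · exact ⟨14, eq_exd15 14 h0 h1 h2 h3⟩
  · exact ⟨15, eq_exd15 15 h0 h1 h2 h3⟩

lemma class1_15 {d : Fin 4 →₀ ℕ} (hdeg : d.degree = 1) :
    ∃ i : Fin 4, d = Finsupp.single i 1 := by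
  rw [deg4_15] at hdeg
  have : (d 0 = 1 ∧ d 1 = 0 ∧ d 2 = 0 ∧ d 3 = 0) ∨ (d 0 = 0 ∧ d 1 = 1 ∧ d 2 = 0 ∧ d 3 = 0)
      ∨ (d 0 = 0 ∧ d 1 = 0 ∧ d 2 = 1 ∧ d 3 = 0) ∨ (d 0 = 0 ∧ d 1 = 0 ∧ d 2 = 0 ∧ d 3 = 1) := by
    omega
  rcases this with ⟨h0,h1,h2,h3⟩|⟨h0,h1,h2,h3⟩|⟨h0,h1,h2,h3⟩|⟨h0,h1,h2,h3⟩
  · exact ⟨0, by ext j; fin_cases j <;> simp [Finsupp.single_apply, h0, h1, h2, h3]⟩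
  · exact ⟨1, by ext j; fin_cases j <;> simp [Finsupp.single_apply, h0, h1, h2, h3]⟩
  · exact ⟨2, by ext j; fin_cases j <;> simp [Finsupp.single_apply, h0, h1, h2, h3]⟩
  · exact ⟨3, by ext j; fin_cases j <;> simp [Finsupp.single_apply, h0, h1, h2, h3]⟩

lemma hc_mul_15 {k σ : Type*} [CommRing k] [DecidableEq σ] {q : MvPolynomial σ k} {a : ℕ}
    (hq : q.IsHomogeneous a) (A : MvPolynomial σ k) (n : ℕ) :
    homogeneousComponent (n + a) (A * q) = homogeneousComponent n A * q := by
  ext d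
  rw [coeff_homogeneousComponent, coeff_mul, coeff_mul]
  by_cases hd : d.degree = n + a
  · rw [if_pos hd]
    refine Finset.sum_congr rfl fun x hx => ?_
    rw [Finset.HasAntidiagonal.mem_antidiagonal] at hx
    rw [coeff_homogeneousComponent]
    by_cases hy : coeff x.2 q = 0
    · simp [hy]
    · have h2 : x.2.degree = a := by
        have := hq hy; rwa [Pi.one_def, ← Finsupp.degree_eq_weight_one] at this
      have h1 : x.1.degree = n := by
        have : (x.1 + x.2).degree = n + a := by rw [hx]; exact hd
        rw [degree_add_15, h2] at this
        omega
      rw [if_pos h1]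
  · rw [if_neg hd]
    refine (Finset.sum_eq_zero fun x hx => ?_).symm
    rw [Finset.HasAntidiagonal.mem_antidiagonal] at hx
    rw [coeff_homogeneousComponent]
    by_cases hy : coeff x.2 q = 0
    · simp [hy]
    · have h2 : x.2.degree = a := by
        have := hq hy; rwa [Pi.one_def, ← Finsupp.degree_eq_weight_one] at this
      rw [if_neg, zero_mul]
      intro h1
      exact hd (by rw [← hx, degree_add_15, h1, h2])

lemma mem_support_degree_15 {k σ : Type*} [CommRing k] {p : MvPolynomial σ k} {n : ℕ}
    (hp : p.IsHomogeneous n) {m : σ →₀ ℕ} (hm : m ∈ p.support) : m.degree = n := by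
  have := hp (MvPolynomial.mem_support_iff.mp hm)
  rwa [Pi.one_def, ← Finsupp.degree_eq_weight_one] at this

variable {k : Type*} [Field k]

def mono16_15 (k : Type*) [Field k] (i : Fin 16) : MvPolynomial (Fin 4) k :=
  monomial (exd15 i) 1

lemma mono16_li_15 : LinearIndependent k (mono16_15 k) := by
  have : mono16_15 k = (basisMonomials (Fin 4) k) ∘ exd15 := by
    funext i; simp [mono16_15, coe_basisMonomials]
  rw [this]
  exact (basisMonomials (Fin 4) k).linearIndependent.comp exd15
    (Finsupp.equivFunOnFinite.symm.injective.comp (by decide : Function.Injective exv15))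

/-- membership in the span of the 16 monomials from support conditions -/
lemma sup16_15 {p : MvPolynomial (Fin 4) k} (hp : p.IsHomogeneous 4)
    (hs : ∀ m ∈ p.support, 2 ≤ m 0 ∨ (1 ≤ m 0 ∧ 1 ≤ m 1)) :
    p ∈ Submodule.span k (Set.range (mono16_15 k)) := by
  have hrep : p = ∑ d ∈ p.support, monomial d (coeff d p) := (support_sum_monomial_coeff p).symm
  rw [hrep]
  refine Submodule.sum_mem _ fun d hd => ?_
  obtain ⟨i, rfl⟩ := class16_15 (mem_support_degree_15 hp hd) (hs d hd)
  have : (monomial (exd15 i) (coeff (exd15 i) p) : MvPolynomial (Fin 4) k)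
      = coeff (exd15 i) p • mono16_15 k i := by
    rw [mono16_15, smul_monomial, smul_eq_mul, mul_one]
  rw [this]
  exact Submodule.smul_mem _ _ (Submodule.subset_span ⟨i, rfl⟩)

lemma prod_support_15 {p q : MvPolynomial (Fin 4) k} {m : Fin 4 →₀ ℕ}
    (hm : m ∈ (p * q).support) : ∃ x ∈ p.support, ∃ y ∈ q.support, x + y = m := by
  classical
  have := support_mul p q hm
  rwa [Finset.mem_add] at this


lemma hc_support_15 {k σ : Type*} [CommRing k] (n : ℕ) (q : MvPolynomial σ k) :
    (homogeneousComponent n q).support ⊆ q.support := by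
  intro m hm
  rw [MvPolynomial.mem_support_iff] at hm ⊢
  rw [coeff_homogeneousComponent] at hm
  intro h
  apply hm
  split <;> simp [h]

lemma X_mul_X_15 {k : Type*} [Field k] (i j : Fin 4) :
    (X i * X j : MvPolynomial (Fin 4) k) =
      monomial (Finsupp.single i 1 + Finsupp.single j 1) 1 := by
  show (monomial (Finsupp.single i 1) 1 * monomial (Finsupp.single j 1) 1 :
      MvPolynomial (Fin 4) k) = _
  rw [monomial_mul, one_mul]

lemma sup1_15 {k : Type*} [Field k] {p : MvPolynomial (Fin 4) k} (hp : p.IsHomogeneous 1) :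
    p ∈ Submodule.span k ({X 0, X 1, X 2, X 3} : Set (MvPolynomial (Fin 4) k)) := by
  have hrep : p = ∑ d ∈ p.support, monomial d (coeff d p) := (support_sum_monomial_coeff p).symm
  rw [hrep]
  refine Submodule.sum_mem _ fun d hd => ?_
  obtain ⟨i, rfl⟩ := class1_15 (mem_support_degree_15 hp hd)
  have : (monomial (Finsupp.single i 1) (coeff (Finsupp.single i 1) p) :
      MvPolynomial (Fin 4) k) = coeff (Finsupp.single i 1) p • X i := by
    show _ = _ • (monomial (Finsupp.single i 1) 1 : MvPolynomial (Fin 4) k)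
    rw [smul_monomial, smul_eq_mul, mul_one]
  rw [this]
  refine Submodule.smul_mem _ _ (Submodule.subset_span ?_)
  fin_cases i <;> simp

lemma disj_rs_15 {k : Type*} [Field k] {s t : Set (Fin 4 →₀ ℕ)} (h : Disjoint s t) :
    Disjoint (MvPolynomial.restrictSupport k s) (MvPolynomial.restrictSupport k t) := by
  rw [_root_.disjoint_iff]
  show Submodule.comap _ _ ⊓ Submodule.comap _ _ = ⊥
  rw [← Submodule.comap_inf, (Finsupp.disjoint_supported_supported h).eq_bot]
  exact LinearEquiv.ker _

end AuxStmt15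

set_option maxHeartbeats 3200000 in
/-- The ideal (x0², x0·x1, x0·f, g) in k[x0,x1,x2,x3], with f a nonzero quadric in x2, x3 and
g a nonzero quartic in (x1², x1·f, f²) not divisible by x0, contains exactly 19 linearly
independent quartic forms. -/
theorem stmt15 {k : Type*} [Field k] (f g : MvPolynomial (Fin 4) k)
    (hf2 : f.IsHomogeneous 2) (hf0 : f ≠ 0)
    (hfvars : ∀ m ∈ f.support, m 0 = 0 ∧ m 1 = 0)
    (hg4 : g.IsHomogeneous 4) (hg0 : g ≠ 0)
    (hgmem : g ∈ Ideal.span {(X 1) ^ 2, X 1 * f, f ^ 2})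
    (hgx0 : ¬ (X 0 : MvPolynomial (Fin 4) k) ∣ g) :
    Module.finrank k
      ↥(Submodule.restrictScalars k
          (Ideal.span {(X 0) ^ 2, X 0 * X 1, X 0 * f, g}) ⊓
        homogeneousSubmodule (Fin 4) k 4) = 19 := by
  classical
  set I : Ideal (MvPolynomial (Fin 4) k) := Ideal.span {(X 0) ^ 2, X 0 * X 1, X 0 * f, g} with hI
  set W1 : Submodule k (MvPolynomial (Fin 4) k) :=
    Submodule.span k (Set.range (mono16_15 k)) with hW1
  set W2 : Submodule k (MvPolynomial (Fin 4) k) :=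
    Submodule.span k {X 0 * X 2 * f, X 0 * X 3 * f} with hW2
  set W3 : Submodule k (MvPolynomial (Fin 4) k) := Submodule.span k {g} with hW3
  -- ideal membership of the generators
  have hx2I : (X 0 ^ 2 : MvPolynomial (Fin 4) k) ∈ I := Ideal.subset_span (by simp)
  have hx01I : (X 0 * X 1 : MvPolynomial (Fin 4) k) ∈ I := Ideal.subset_span (by simp)
  have hx0fI : (X 0 * f : MvPolynomial (Fin 4) k) ∈ I := Ideal.subset_span (by simp)
  have hgI : g ∈ I := Ideal.subset_span (by simp)
  -- homogeneity facts
  have hX : ∀ i : Fin 4, (X i : MvPolynomial (Fin 4) k).IsHomogeneous 1 :=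
    fun i => isHomogeneous_X k i
  have hx02 : (X 0 ^ 2 : MvPolynomial (Fin 4) k).IsHomogeneous 2 := by
    have := (hX 0).pow 2; norm_num at this; exact this
  have hx01h : (X 0 * X 1 : MvPolynomial (Fin 4) k).IsHomogeneous 2 := by
    have := (hX 0).mul (hX 1); norm_num at this; exact this
  have hx0f3 : (X 0 * f : MvPolynomial (Fin 4) k).IsHomogeneous 3 := by
    have := (hX 0).mul hf2; norm_num at this; exact this
  have hx2f4 : (X 0 * X 2 * f : MvPolynomial (Fin 4) k).IsHomogeneous 4 := by
    have := ((hX 0).mul (hX 2)).mul hf2; norm_num at this; exact this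
  have hx3f4 : (X 0 * X 3 * f : MvPolynomial (Fin 4) k).IsHomogeneous 4 := by
    have := ((hX 0).mul (hX 3)).mul hf2; norm_num at this; exact this
  have hx02f4 : (X 0 ^ 2 * f : MvPolynomial (Fin 4) k).IsHomogeneous 4 := by
    have := hx02.mul hf2; norm_num at this; exact this
  have hx01f4 : (X 0 * X 1 * f : MvPolynomial (Fin 4) k).IsHomogeneous 4 := by
    have := hx01h.mul hf2; norm_num at this; exact this
  -- decidable facts about the 16 exponents
  have key1 : ∀ i : Fin 16, 2 ≤ exv15 i 0 ∨ (1 ≤ exv15 i 0 ∧ 1 ≤ exv15 i 1) := by decide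
  have key2 : ∀ i : Fin 16, exv15 i 0 + exv15 i 1 + exv15 i 2 + exv15 i 3 = 4 := by decide
  -- monomials divisible by x0^2 or x0x1 are in the ideal
  have hmon2 : ∀ d : Fin 4 →₀ ℕ, 2 ≤ d 0 →
      (monomial d 1 : MvPolynomial (Fin 4) k) ∈ I := by
    intro d hd
    have hd' : Finsupp.single 0 2 + (d - Finsupp.single 0 2) = d := by
      ext j
      rcases eq_or_ne j 0 with rfl | hj
      · simp [Finsupp.tsub_apply, Finsupp.single_apply]
        omega
      · simp [Finsupp.tsub_apply, Finsupp.single_apply, if_neg (Ne.symm hj)]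
    have : (monomial d 1 : MvPolynomial (Fin 4) k)
        = X 0 ^ 2 * monomial (d - Finsupp.single 0 2) 1 := by
      rw [X_pow_eq_monomial, monomial_mul, one_mul, hd']
    rw [this]
    exact Ideal.mul_mem_right _ _ hx2I
  have hmon11 : ∀ d : Fin 4 →₀ ℕ, 1 ≤ d 0 → 1 ≤ d 1 →
      (monomial d 1 : MvPolynomial (Fin 4) k) ∈ I := by
    intro d hd0 hd1
    have hd' : (Finsupp.single 0 1 + Finsupp.single 1 1)
        + (d - (Finsupp.single 0 1 + Finsupp.single 1 1)) = d := by
      ext j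
      have hsa : ∀ a : Fin 4, ∀ n : ℕ, Finsupp.single a n j = if a = j then n else 0 :=
        fun a n => Finsupp.single_apply
      rcases eq_or_ne j 0 with rfl | hj0
      · simp [Finsupp.tsub_apply, hsa]
        omega
      rcases eq_or_ne j 1 with rfl | hj1
      · simp [Finsupp.tsub_apply, hsa]
        omega
      · simp [Finsupp.tsub_apply, hsa, if_neg (Ne.symm hj0), if_neg (Ne.symm hj1)]
    have : (monomial d 1 : MvPolynomial (Fin 4) k)
        = (X 0 * X 1) * monomial (d - (Finsupp.single 0 1 + Finsupp.single 1 1)) 1 := by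
      rw [X_mul_X_15, monomial_mul, one_mul, hd']
    rw [this]
    exact Ideal.mul_mem_right _ _ hx01I
  -- the main intersection
  set V : Submodule k (MvPolynomial (Fin 4) k) :=
    Submodule.restrictScalars k I ⊓ homogeneousSubmodule (Fin 4) k 4 with hV
  -- ⊇
  have hW1V : W1 ≤ V := by
    rw [hW1, Submodule.span_le]
    rintro _ ⟨i, rfl⟩
    rw [SetLike.mem_coe, hV, Submodule.mem_inf]
    constructor
    · rw [Submodule.restrictScalars_mem]
      rcases key1 i with h | ⟨h0, h1⟩
      · exact hmon2 _ (by rwa [exd15_apply])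
      · exact hmon11 _ (by rwa [exd15_apply]) (by rwa [exd15_apply])
    · rw [mem_homogeneousSubmodule]
      exact isHomogeneous_monomial 1 (by rw [deg4_15]; simp only [exd15_apply]; exact key2 i)
  have hW2V : W2 ≤ V := by
    rw [hW2, Submodule.span_le]
    rintro q hq
    simp only [Set.mem_insert_iff, Set.mem_singleton_iff] at hq
    rcases hq with rfl | rfl <;> rw [SetLike.mem_coe, hV, Submodule.mem_inf] <;> constructor
    · rw [Submodule.restrictScalars_mem]
      have : (X 0 * X 2 * f : MvPolynomial (Fin 4) k) = (X 0 * f) * X 2 := by ring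
      rw [this]; exact Ideal.mul_mem_right _ _ hx0fI
    · exact (mem_homogeneousSubmodule _ _).mpr hx2f4
    · rw [Submodule.restrictScalars_mem]
      have : (X 0 * X 3 * f : MvPolynomial (Fin 4) k) = (X 0 * f) * X 3 := by ring
      rw [this]; exact Ideal.mul_mem_right _ _ hx0fI
    · exact (mem_homogeneousSubmodule _ _).mpr hx3f4
  have hW3V : W3 ≤ V := by
    rw [hW3, Submodule.span_le]
    rintro q hq
    simp only [Set.mem_singleton_iff] at hq
    subst hq
    rw [SetLike.mem_coe, hV, Submodule.mem_inf]
    exact ⟨(Submodule.restrictScalars_mem _ _ _).mpr hgI, (mem_homogeneousSubmodule _ _).mpr hg4⟩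
  -- ⊆
  have hVle : V ≤ (W1 ⊔ W2) ⊔ W3 := by
    rintro p hp
    rw [hV, Submodule.mem_inf] at hp
    obtain ⟨hpI, hph⟩ := hp
    rw [Submodule.restrictScalars_mem, hI] at hpI
    obtain ⟨A, z1, hz1, rfl⟩ := Ideal.mem_span_insert.mp hpI
    obtain ⟨B, z2, hz2, rfl⟩ := Ideal.mem_span_insert.mp hz1
    obtain ⟨Cc, z3, hz3, rfl⟩ := Ideal.mem_span_insert.mp hz2
    obtain ⟨D, rfl⟩ := Ideal.mem_span_singleton'.mp hz3
    have hid := homogeneousComponent_of_mem hph (m := 4)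
    rw [if_pos rfl] at hid
    rw [← hid, map_add, map_add, map_add]
    -- piece 1
    have p1 : homogeneousComponent 4 (A * X 0 ^ 2) ∈ W1 := by
      rw [hW1]
      refine sup16_15 (homogeneousComponent_isHomogeneous 4 _) fun m hm => ?_
      obtain ⟨x, hx, y, hy, rfl⟩ := prod_support_15 (hc_support_15 4 _ hm)
      rw [support_X_pow] at hy
      simp only [Finset.mem_singleton] at hy
      subst hy
      left
      simp [Finsupp.add_apply, Finsupp.single_apply]
    -- piece 2
    have p2 : homogeneousComponent 4 (B * (X 0 * X 1)) ∈ W1 := by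
      rw [hW1]
      refine sup16_15 (homogeneousComponent_isHomogeneous 4 _) fun m hm => ?_
      obtain ⟨x, hx, y, hy, rfl⟩ := prod_support_15 (hc_support_15 4 _ hm)
      rw [X_mul_X_15, support_monomial] at hy
      simp only [if_neg (one_ne_zero), Finset.mem_singleton] at hy
      subst hy
      right
      constructor <;> simp [Finsupp.add_apply, Finsupp.single_apply]
    -- piece 3
    have p3 : homogeneousComponent 4 (Cc * (X 0 * f)) ∈ W1 ⊔ W2 := by
      have hcm := hc_mul_15 hx0f3 Cc 1
      rw [show (1 + 3 : ℕ) = 4 from rfl] at hcm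
      rw [hcm]
      have h1C := sup1_15 (homogeneousComponent_isHomogeneous 1 Cc)
      have himg : ∀ q ∈ ({X 0, X 1, X 2, X 3} : Set (MvPolynomial (Fin 4) k)),
          q * (X 0 * f) ∈ W1 ⊔ W2 := by
        intro q hq
        simp only [Set.mem_insert_iff, Set.mem_singleton_iff] at hq
        rcases hq with rfl | rfl | rfl | rfl
        · apply Submodule.mem_sup_left
          rw [hW1]
          have : (X 0 * (X 0 * f) : MvPolynomial (Fin 4) k) = X 0 ^ 2 * f := by ring
          rw [this]
          refine sup16_15 hx02f4 fun m hm => ?_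
          obtain ⟨x, hx, y, hy, rfl⟩ := prod_support_15 hm
          rw [support_X_pow] at hx
          simp only [Finset.mem_singleton] at hx
          subst hx
          left
          simp [Finsupp.add_apply, Finsupp.single_apply]
        · apply Submodule.mem_sup_left
          rw [hW1]
          have : (X 1 * (X 0 * f) : MvPolynomial (Fin 4) k) = X 0 * X 1 * f := by ring
          rw [this]
          refine sup16_15 hx01f4 fun m hm => ?_
          obtain ⟨x, hx, y, hy, rfl⟩ := prod_support_15 hm
          rw [X_mul_X_15, support_monomial] at hx
          simp only [if_neg (one_ne_zero), Finset.mem_singleton] at hx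
          subst hx
          right
          constructor <;> simp [Finsupp.add_apply, Finsupp.single_apply]
        · apply Submodule.mem_sup_right
          rw [hW2]
          have : (X 2 * (X 0 * f) : MvPolynomial (Fin 4) k) = X 0 * X 2 * f := by ring
          rw [this]
          exact Submodule.subset_span (by simp)
        · apply Submodule.mem_sup_right
          rw [hW2]
          have : (X 3 * (X 0 * f) : MvPolynomial (Fin 4) k) = X 0 * X 3 * f := by ring
          rw [this]
          exact Submodule.subset_span (by simp)
      exact Submodule.span_induction (p := fun q _ => q * (X 0 * f) ∈ W1 ⊔ W2)
        (fun q hq => himg q hq)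
        (by show (0 : MvPolynomial (Fin 4) k) * (X 0 * f) ∈ W1 ⊔ W2; rw [zero_mul]; exact zero_mem _)
        (fun a b _ _ ha hb => by
          show (a + b) * (X 0 * f) ∈ W1 ⊔ W2
          rw [add_mul]; exact add_mem ha hb)
        (fun c a _ ha => by
          show (c • a) * (X 0 * f) ∈ W1 ⊔ W2
          rw [smul_mul_assoc]; exact Submodule.smul_mem _ _ ha) h1C
    -- piece 4
    have p4 : homogeneousComponent 4 (D * g) ∈ W3 := by
      have hcm := hc_mul_15 hg4 D 0
      rw [show (0 + 4 : ℕ) = 4 from rfl] at hcm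
      rw [hcm, homogeneousComponent_zero, ← smul_eq_C_mul]
      exact Submodule.smul_mem _ _ (Submodule.mem_span_singleton_self g)
    refine add_mem (Submodule.mem_sup_left (Submodule.mem_sup_left p1))
      (add_mem (Submodule.mem_sup_left (Submodule.mem_sup_left p2))
        (add_mem (Submodule.mem_sup_left p3) (Submodule.mem_sup_right p4)))
  have hmain : V = (W1 ⊔ W2) ⊔ W3 :=
    le_antisymm hVle (sup_le (sup_le hW1V hW2V) hW3V)
  -- finrank computations
  haveI : FiniteDimensional k W1 := by
    rw [hW1]; exact FiniteDimensional.span_of_finite k (Set.finite_range _)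
  haveI : FiniteDimensional k W2 := by
    rw [hW2]; exact FiniteDimensional.span_of_finite k ((Set.finite_singleton _).insert _)
  haveI : FiniteDimensional k W3 := by
    rw [hW3]; exact FiniteDimensional.span_of_finite k (Set.finite_singleton _)
  have hfinW1 : Module.finrank k W1 = 16 := by
    rw [hW1, finrank_span_eq_card mono16_li_15]; simp
  have hfinW2 : Module.finrank k W2 = 2 := by
    have hx0fne : (X 0 * f : MvPolynomial (Fin 4) k) ≠ 0 := mul_ne_zero (X_ne_zero 0) hf0
    have hinj : Function.Injective (LinearMap.mulLeft k (X 0 * f)) := by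
      intro a b h
      simp only [LinearMap.mulLeft_apply] at h
      exact mul_left_cancel₀ hx0fne h
    set v2 : Fin 2 → MvPolynomial (Fin 4) k := ![X 2, X 3] with hv2
    have li2 : LinearIndependent k v2 := by
      have : v2 = (basisMonomials (Fin 4) k) ∘
          (fun i : Fin 2 => Finsupp.single ((![2, 3] : Fin 2 → Fin 4) i) 1) := by
        funext i; fin_cases i <;> rfl
      rw [this]
      exact (basisMonomials (Fin 4) k).linearIndependent.comp _
        ((Finsupp.single_left_injective one_ne_zero).comp
          (by decide : Function.Injective (![2, 3] : Fin 2 → Fin 4)))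
    have hsp2 : W2 = Submodule.map (LinearMap.mulLeft k (X 0 * f))
        (Submodule.span k (Set.range v2)) := by
      rw [Submodule.map_span]
      have hr : Set.range v2 = {X 2, X 3} := by
        rw [hv2]
        ext q
        simp only [Set.mem_range, Fin.exists_fin_two, Set.mem_insert_iff, Set.mem_singleton_iff]
        constructor
        · rintro (rfl | rfl) <;> simp
        · rintro (rfl | rfl)
          · exact Or.inl rfl
          · exact Or.inr rfl
      rw [hr, Set.image_insert_eq, Set.image_singleton]
      simp only [LinearMap.mulLeft_apply]
      rw [show (X 0 * f) * X 2 = (X 0 * X 2 * f : MvPolynomial (Fin 4) k) by ring,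
        show (X 0 * f) * X 3 = (X 0 * X 3 * f : MvPolynomial (Fin 4) k) by ring]
    rw [hsp2, ← LinearEquiv.finrank_eq (Submodule.equivMapOfInjective _ hinj _),
      finrank_span_eq_card li2]
    simp
  have hfinW3 : Module.finrank k W3 = 1 := finrank_span_singleton hg0
  -- support bounds
  have SUPW1 : W1 ≤ MvPolynomial.restrictSupport k
      {d : Fin 4 →₀ ℕ | 1 ≤ d 0 ∧ (2 ≤ d 0 ∨ 1 ≤ d 1)} := by
    rw [hW1, Submodule.span_le]
    rintro _ ⟨i, rfl⟩
    rw [SetLike.mem_coe, MvPolynomial.restrictSupport, AddMonoidAlgebra.mem_supported]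
    intro d hd
    rw [Finset.mem_coe, mono16_15] at hd
    have hd2 := MvPolynomial.support_monomial_subset hd
    rw [Finset.mem_singleton] at hd2
    subst hd2
    have h1 := key1 i
    simp only [Set.mem_setOf_eq, exd15_apply]
    omega
  have SUPW2 : W2 ≤ MvPolynomial.restrictSupport k
      {d : Fin 4 →₀ ℕ | d 0 = 1 ∧ d 1 = 0} := by
    rw [hW2, Submodule.span_le]
    rintro q hq
    simp only [Set.mem_insert_iff, Set.mem_singleton_iff] at hq
    have hgen : ∀ j : Fin 4, j ≠ 0 → j ≠ 1 → ∀ m ∈ (X 0 * X j * f : MvPolynomial (Fin 4) k).support,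
        m 0 = 1 ∧ m 1 = 0 := by
      intro j hj0 hj1 m hm
      obtain ⟨x, hx, y, hy, rfl⟩ := prod_support_15 hm
      rw [X_mul_X_15, support_monomial] at hx
      simp only [if_neg (one_ne_zero), Finset.mem_singleton] at hx
      subst hx
      obtain ⟨hy0, hy1⟩ := hfvars y hy
      constructor <;>
        simp [Finsupp.add_apply, Finsupp.single_apply, hy0, hy1, hj0, hj1]
    rcases hq with rfl | rfl
    · rw [SetLike.mem_coe, MvPolynomial.restrictSupport, AddMonoidAlgebra.mem_supported]
      intro d hd
      exact hgen 2 (by decide) (by decide) d hd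
    · rw [SetLike.mem_coe, MvPolynomial.restrictSupport, AddMonoidAlgebra.mem_supported]
      intro d hd
      exact hgen 3 (by decide) (by decide) d hd
  have hd12 : Disjoint W1 W2 := by
    refine Disjoint.mono SUPW1 SUPW2 (disj_rs_15 ?_)
    rw [Set.disjoint_left]
    rintro d ⟨h1, h2⟩ ⟨h3, h4⟩
    omega
  have hrank12 : Module.finrank k ↥(W1 ⊔ W2) = 18 := by
    have harith := Submodule.finrank_sup_add_finrank_inf_eq W1 W2
    rw [hd12.eq_bot, finrank_bot, hfinW1, hfinW2] at harith
    omega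
  have hgnot : g ∉ W1 ⊔ W2 := by
    intro hmem
    apply hgx0
    have hsub1 : {d : Fin 4 →₀ ℕ | 1 ≤ d 0 ∧ (2 ≤ d 0 ∨ 1 ≤ d 1)} ⊆
        {d : Fin 4 →₀ ℕ | 1 ≤ d 0} := fun d hd => hd.1
    have hsub2 : {d : Fin 4 →₀ ℕ | d 0 = 1 ∧ d 1 = 0} ⊆ {d : Fin 4 →₀ ℕ | 1 ≤ d 0} := by
      rintro d ⟨h1, h2⟩
      simp only [Set.mem_setOf_eq]
      omega
    have hsup : W1 ⊔ W2 ≤ MvPolynomial.restrictSupport k {d : Fin 4 →₀ ℕ | 1 ≤ d 0} :=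
      sup_le (SUPW1.trans (MvPolynomial.restrictSupport_mono k hsub1))
        (SUPW2.trans (MvPolynomial.restrictSupport_mono k hsub2))
    have := hsup hmem
    rw [MvPolynomial.restrictSupport, AddMonoidAlgebra.mem_supported] at this
    have hrep : g = ∑ d ∈ g.support, monomial d (coeff d g) := (support_sum_monomial_coeff g).symm
    rw [hrep]
    refine Finset.dvd_sum fun d hd => ?_
    refine X_dvd_monomial.mpr (Or.inr ?_)
    have := this hd
    simp only [Set.mem_setOf_eq] at this
    omega
  have hd3 : Disjoint (W1 ⊔ W2) W3 := by
    rw [hW3]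
    exact (Submodule.disjoint_span_singleton' hg0).mpr hgnot
  have hrank19 : Module.finrank k ↥((W1 ⊔ W2) ⊔ W3) = 19 := by
    have harith := Submodule.finrank_sup_add_finrank_inf_eq (W1 ⊔ W2) W3
    rw [hd3.eq_bot, finrank_bot, hrank12, hfinW3] at harith
    omega
  rw [hmain]
  exact hrank19
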